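/- Suppose a group Γ acts harmonically on a graph G of genus g ≥ 2 and the quotient G/Γ has genus at least 1. Then |Γ| ≤ 2(g − 1); more precisely, if the quotient map is unramified (R = 0) then g(G/Γ) ≥ 2 and |Γ| = (g − 1)/(g(G/Γ) − 1) ≤ g − 1, while if R ≠ 0 then |Γ| ≤ 2g − 2. Consequently, if |Γ| > 2(g − 1) then g(G/Γ) = 0. -/

import Mathlib

open scoped Classical

/-- A finite connected multigraph without loop edges. -/
structure Multigraph where
  V : Type
  E : Type
  [fintypeV : Fintype V]
  [fintypeE : Fintype E]
  ends : E → Sym2 V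
  loopless : ∀ e : E, ¬ (ends e).IsDiag
  connected : (SimpleGraph.fromRel fun x y : V => ∃ e : E, ends e = s(x, y)).Connected

attribute [instance] Multigraph.fintypeV Multigraph.fintypeE

namespace Multigraph

/-- The genus (first Betti number, cyclomatic number) of a multigraph. -/
def genus (G : Multigraph) : ℤ :=
  (Fintype.card G.E : ℤ) - (Fintype.card G.V : ℤ) + 1

/-- A cycle in a multigraph, given as a nonempty set of edges such that every vertex is
incident to either 0 or 2 of its edges. -/
def IsCycleSet (G : Multigraph) (C : Set G.E) : Prop :=
  C.Nonempty ∧ ∀ x : G.V,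
    Nat.card {e : G.E // e ∈ C ∧ x ∈ G.ends e} = 0 ∨
    Nat.card {e : G.E // e ∈ C ∧ x ∈ G.ends e} = 2

end Multigraph

/-- A morphism of multigraphs: vertices go to vertices, and each edge goes either to an
edge joining the images of its endpoints, or to the common image of its endpoints
(in which case the edge is *vertical*). -/
structure Morphism (G G' : Multigraph) where
  vmap : G.V → G'.V
  emap : G.E → G'.E ⊕ G'.V
  compat : ∀ e : G.E,
    (∀ e', emap e = Sum.inl e' → G'.ends e' = (G.ends e).map vmap) ∧
    (∀ v, emap e = Sum.inr v → (G.ends e).map vmap = Sym2.diag v)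

namespace Morphism

/-- A morphism is harmonic if for every vertex `x`, the number of edges incident to `x`
mapping to a given edge `e'` incident to `φ(x)` is independent of the choice of `e'`. -/
def Harmonic {G G' : Multigraph} (φ : Morphism G G') : Prop :=
  ∀ (x : G.V) (e₁ e₂ : G'.E), φ.vmap x ∈ G'.ends e₁ → φ.vmap x ∈ G'.ends e₂ →
    Nat.card {e : G.E // x ∈ G.ends e ∧ φ.emap e = Sum.inl e₁} =
    Nat.card {e : G.E // x ∈ G.ends e ∧ φ.emap e = Sum.inl e₂}

/-- A morphism is nonconstant if its image is not a single vertex. -/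
def Nonconstant {G G' : Multigraph} (φ : Morphism G G') : Prop :=
  ∃ x y : G.V, φ.vmap x ≠ φ.vmap y

/-- Composition of morphisms of multigraphs. -/
def comp {G₁ G₂ G₃ : Multigraph} (ψ : Morphism G₂ G₃) (φ : Morphism G₁ G₂) :
    Morphism G₁ G₃ where
  vmap := ψ.vmap ∘ φ.vmap
  emap e := Sum.elim ψ.emap (fun v => Sum.inr (ψ.vmap v)) (φ.emap e)
  compat e := by
    constructor
    · intro e'' h
      rcases hφ : φ.emap e with e' | v
      · simp only [hφ, Sum.elim_inl] at h
        have h1 := (φ.compat e).1 e' hφ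
        have h2 := (ψ.compat e').1 e'' h
        rw [h2, h1, Sym2.map_map]
      · simp only [hφ, Sum.elim_inr] at h
        simp at h
    · intro v h
      rcases hφ : φ.emap e with e' | v₀
      · simp only [hφ, Sum.elim_inl] at h
        have h1 := (φ.compat e).1 e' hφ
        have h2 := (ψ.compat e').2 v h
        rw [← Sym2.map_map, ← h1]
        exact h2
      · simp only [hφ, Sum.elim_inr, Sum.inr.injEq] at h
        have h1 := (φ.compat e).2 v₀ hφ
        subst h
        rw [← Sym2.map_map, h1]
        rfl
end Morphism

/-- A group of automorphisms of a multigraph `G` (a faithful action of `Γ` on `G` by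
automorphisms, i.e. a subgroup of `Aut(G)`). -/
structure GraphAction (Γ : Type) [Group Γ] (G : Multigraph) where
  actV : Γ →* Equiv.Perm G.V
  actE : Γ →* Equiv.Perm G.E
  ends_map : ∀ (γ : Γ) (e : G.E), G.ends (actE γ e) = (G.ends e).map (actV γ)
  faithful : ∀ γ : Γ, (∀ x : G.V, actV γ x = x) → (∀ e : G.E, actE γ e = e) → γ = 1

namespace GraphAction

variable {Γ : Type} [Group Γ] {G : Multigraph}

/-- Two vertices lie in the same `Δ`-orbit. -/
def vrel (A : GraphAction Γ G) (Δ : Subgroup Γ) (x y : G.V) : Prop :=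
  ∃ δ ∈ Δ, A.actV δ x = y

/-- Two edges lie in the same `Δ`-orbit. -/
def erel (A : GraphAction Γ G) (Δ : Subgroup Γ) (e f : G.E) : Prop :=
  ∃ δ ∈ Δ, A.actE δ e = f

/-- The setoid of `Δ`-orbits of vertices. -/
def vSetoid (A : GraphAction Γ G) (Δ : Subgroup Γ) : Setoid G.V where
  r := A.vrel Δ
  iseqv := by
    constructor
    · intro x; exact ⟨1, Δ.one_mem, by simp⟩
    · rintro x y ⟨δ, hδ, h⟩
      refine ⟨δ⁻¹, Δ.inv_mem hδ, ?_⟩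
      rw [map_inv, ← h]
      exact Equiv.symm_apply_apply _ _
    · rintro x y z ⟨δ₁, h1, e1⟩ ⟨δ₂, h2, e2⟩
      refine ⟨δ₂ * δ₁, Δ.mul_mem h2 h1, ?_⟩
      rw [map_mul]
      simp [Equiv.Perm.mul_apply, e1, e2]

/-- The setoid of `Δ`-orbits of edges. -/
def eSetoid (A : GraphAction Γ G) (Δ : Subgroup Γ) : Setoid G.E where
  r := A.erel Δ
  iseqv := by
    constructor
    · intro e; exact ⟨1, Δ.one_mem, by simp⟩
    · rintro e f ⟨δ, hδ, h⟩
      refine ⟨δ⁻¹, Δ.inv_mem hδ, ?_⟩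
      rw [map_inv, ← h]
      exact Equiv.symm_apply_apply _ _
    · rintro e f k ⟨δ₁, h1, e1⟩ ⟨δ₂, h2, e2⟩
      refine ⟨δ₂ * δ₁, Δ.mul_mem h2 h1, ?_⟩
      rw [map_mul]
      simp [Equiv.Perm.mul_apply, e1, e2]

/-- An edge is `Δ`-vertical if its two endpoints lie in the same `Δ`-orbit (so it is
contracted by the quotient morphism `G → G/Δ`). -/
def Vertical (A : GraphAction Γ G) (Δ : Subgroup Γ) (e : G.E) : Prop :=
  ∃ x y : G.V, G.ends e = s(x, y) ∧ A.vrel Δ x y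

/-- The vertex set of the quotient graph `G/Δ`: the `Δ`-orbits of vertices. -/
abbrev quotV (A : GraphAction Γ G) (Δ : Subgroup Γ) : Type :=
  Quotient (A.vSetoid Δ)

/-- The edge set of the quotient graph `G/Δ`: the `Δ`-orbits of non-vertical edges. -/
abbrev quotE (A : GraphAction Γ G) (Δ : Subgroup Γ) : Type :=
  Quotient ((A.eSetoid Δ).comap (Subtype.val : {e : G.E // ¬ A.Vertical Δ e} → G.E))

/-- The genus of the quotient graph `G/Δ`. -/
noncomputable def quotGenus (A : GraphAction Γ G) (Δ : Subgroup Γ) : ℤ :=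
  (Nat.card (A.quotE Δ) : ℤ) - (Nat.card (A.quotV Δ) : ℤ) + 1

/-- The order of the stabilizer `Δ_x` of a vertex `x`. -/
noncomputable def stabOrder (A : GraphAction Γ G) (Δ : Subgroup Γ) (x : G.V) : ℕ :=
  Nat.card {γ : Γ // γ ∈ Δ ∧ A.actV γ x = x}

/-- The vertical multiplicity of a vertex `x`: the number of `Δ`-vertical edges
incident to `x`. -/
noncomputable def vertMult (A : GraphAction Γ G) (Δ : Subgroup Γ) (x : G.V) : ℕ :=
  Nat.card {e : G.E // x ∈ G.ends e ∧ A.Vertical Δ e}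

/-- `r_y = |Δ_x|` for a vertex `y` of the quotient `G/Δ` and any `x` in the fiber over `y`. -/
noncomputable def r (A : GraphAction Γ G) (Δ : Subgroup Γ) (y : A.quotV Δ) : ℕ :=
  A.stabOrder Δ (Quotient.out y)

/-- `w_y = v(x)/|Δ_x|` for a vertex `y` of the quotient `G/Δ` and any `x` in the fiber. -/
noncomputable def w (A : GraphAction Γ G) (Δ : Subgroup Γ) (y : A.quotV Δ) : ℕ :=
  A.vertMult Δ (Quotient.out y) / A.r Δ y

/-- The ramification number `R = Σ_y [2(1 - 1/r_y) + w_y]` of the quotient map `G → G/Δ`. -/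
noncomputable def ram (A : GraphAction Γ G) (Δ : Subgroup Γ) : ℚ :=
  ∑ᶠ y : A.quotV Δ, (2 * (1 - 1 / (A.r Δ y : ℚ)) + (A.w Δ y : ℚ))

/-- A vertex `y` of the quotient `G/Δ` is a branch point if `2(1 - 1/r_y) + w_y > 0`. -/
def IsBranch (A : GraphAction Γ G) (Δ : Subgroup Γ) (y : A.quotV Δ) : Prop :=
  0 < 2 * (1 - 1 / (A.r Δ y : ℚ)) + (A.w Δ y : ℚ)

/-- The quotient morphism `φ_Δ : G → G/Δ` is harmonic: for every vertex `x` of `G` and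
every pair of quotient edges incident to the image of `x`, the numbers of preimages
incident to `x` agree. -/
def QuotHarmonic (A : GraphAction Γ G) (Δ : Subgroup Γ) : Prop :=
  ∀ (x : G.V) (e₁ e₂ : G.E), ¬ A.Vertical Δ e₁ → ¬ A.Vertical Δ e₂ →
    (∃ v ∈ G.ends e₁, A.vrel Δ x v) → (∃ v ∈ G.ends e₂, A.vrel Δ x v) →
    Nat.card {e : G.E // x ∈ G.ends e ∧ A.erel Δ e e₁} =
    Nat.card {e : G.E // x ∈ G.ends e ∧ A.erel Δ e e₂}

/-- The quotient morphism `φ_Δ : G → G/Δ` is non-degenerate: no neighborhood `x(1)` is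
contracted to a vertex, i.e. every vertex has a neighbor outside its `Δ`-orbit. -/
def QuotNondeg (A : GraphAction Γ G) (Δ : Subgroup Γ) : Prop :=
  ∀ x : G.V, ∃ e : G.E, x ∈ G.ends e ∧ ∃ y ∈ G.ends e, ¬ A.vrel Δ x y

/-- `Γ` acts harmonically on `G` if for every subgroup `Δ ≤ Γ` the quotient morphism
`φ_Δ : G → G/Δ` is harmonic and non-degenerate. -/
def ActsHarmonically (A : GraphAction Γ G) : Prop :=
  ∀ Δ : Subgroup Γ, A.QuotHarmonic Δ ∧ A.QuotNondeg Δ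

/-- The quotient map `G → G/Δ` is horizontally unramified: all vertex stabilizers in `Δ`
are trivial. -/
def HorizUnramified (A : GraphAction Γ G) (Δ : Subgroup Γ) : Prop :=
  ∀ (x : G.V) (γ : Γ), γ ∈ Δ → A.actV γ x = x → γ = 1

end GraphAction

section Aux

lemma sym2_exists_mk {α : Type*} (z : Sym2 α) : ∃ a b : α, z = s(a, b) := by
  induction z using Sym2.ind with
  | _ a b => exact ⟨a, b, rfl⟩

namespace GraphAction

variable {Γ : Type} [Group Γ] {G : Multigraph}

lemma finite_aux (A : GraphAction Γ G) : Finite Γ := by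
  apply Finite.of_injective
    (fun γ : Γ => ((A.actV γ, A.actE γ) : Equiv.Perm G.V × Equiv.Perm G.E))
  intro a b h
  have h1 : A.actV a = A.actV b := congrArg Prod.fst h
  have h2 : A.actE a = A.actE b := congrArg Prod.snd h
  have key : a * b⁻¹ = 1 := by
    apply A.faithful
    · intro x
      rw [map_mul, Equiv.Perm.mul_apply, map_inv, h1]
      simp
    · intro e
      rw [map_mul, Equiv.Perm.mul_apply, map_inv, h2]
      simp
  exact mul_inv_eq_one.mp key

lemma mem_ends_act (A : GraphAction Γ G) (γ : Γ) {x : G.V} {e : G.E} (h : x ∈ G.ends e) :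
    A.actV γ x ∈ G.ends (A.actE γ e) := by
  rw [A.ends_map]
  exact Sym2.mem_map.2 ⟨x, h, rfl⟩

lemma ne_of_ends_eq (G : Multigraph) {e : G.E} {a b : G.V} (h : G.ends e = s(a, b)) :
    a ≠ b := by
  intro hab
  apply G.loopless e
  rw [h, hab]
  exact Sym2.mk_isDiag_iff.mpr rfl

lemma actV_zpowers_fix (A : GraphAction Γ G) {γ : Γ} {v : G.V} (h : A.actV γ v = v)
    {δ : Γ} (hδ : δ ∈ Subgroup.zpowers γ) : A.actV δ v = v := by
  obtain ⟨k, hk⟩ := Subgroup.mem_zpowers_iff.mp hδ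
  rw [← hk, map_zpow]
  exact Function.IsFixedPt.perm_zpow h k

lemma actE_zpowers_fix (A : GraphAction Γ G) {γ : Γ} {e : G.E} (h : A.actE γ e = e)
    {δ : Γ} (hδ : δ ∈ Subgroup.zpowers γ) : A.actE δ e = e := by
  obtain ⟨k, hk⟩ := Subgroup.mem_zpowers_iff.mp hδ
  rw [← hk, map_zpow]
  exact Function.IsFixedPt.perm_zpow h k

lemma fix_incident_edges (A : GraphAction Γ G) (hA : A.ActsHarmonically) {γ : Γ} {v : G.V}
    (hv : A.actV γ v = v) {f : G.E} (hvf : v ∈ G.ends f) (hf : A.actE γ f = f) :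
    ∀ g : G.E, v ∈ G.ends g → A.actE γ g = g := by
  intro g hvg
  set Δ := Subgroup.zpowers γ with hΔ
  have hnv : ∀ h : G.E, v ∈ G.ends h → ¬ A.Vertical Δ h := by
    rintro h hvh ⟨a, b, hab, δ, hδ, hab2⟩
    have hne : a ≠ b := ne_of_ends_eq G hab
    rcases Sym2.mem_iff.mp (hab ▸ hvh) with h1 | h1
    · have hb : b = v := by rw [← hab2, ← h1, A.actV_zpowers_fix hv hδ]
      exact hne (hb.trans h1).symm
    · have ha : a = v := by
        have h3 : A.actV δ⁻¹ (A.actV δ a) = a := by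
          rw [map_inv]; exact Equiv.symm_apply_apply _ _
        rw [hab2, ← h1] at h3
        rw [← h3]
        exact A.actV_zpowers_fix hv (inv_mem hδ)
      exact hne (ha.trans h1)
  have refl_v : A.vrel Δ v v := ⟨1, one_mem _, by simp⟩
  have hH := (hA Δ).1 v g f (hnv g hvg) (hnv f hvf) ⟨v, hvg, refl_v⟩ ⟨v, hvf, refl_v⟩
  have huniq : ∀ h : {h : G.E // v ∈ G.ends h ∧ A.erel Δ h f},
      h = ⟨f, hvf, ⟨1, one_mem _, by simp⟩⟩ := by
    rintro ⟨h, hh1, δ, hδ, hh2⟩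
    apply Subtype.ext
    have h4 : A.actE δ h = A.actE δ f := by rw [hh2, A.actE_zpowers_fix hf hδ]
    exact (A.actE δ).injective h4
  have hcard1 : Nat.card {h : G.E // v ∈ G.ends h ∧ A.erel Δ h f} = 1 := by
    haveI : Unique {h : G.E // v ∈ G.ends h ∧ A.erel Δ h f} :=
      ⟨⟨⟨f, hvf, ⟨1, one_mem _, by simp⟩⟩⟩, huniq⟩
    exact Nat.card_unique
  by_contra hne
  have hnt : Nontrivial {h : G.E // v ∈ G.ends h ∧ A.erel Δ h g} := by
    refine ⟨⟨g, hvg, ⟨1, one_mem _, by simp⟩⟩, ⟨A.actE γ g, ?_, ?_⟩, ?_⟩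
    · have h5 := A.mem_ends_act γ hvg; rwa [hv] at h5
    · exact ⟨γ⁻¹, inv_mem (Subgroup.mem_zpowers γ),
        by rw [map_inv]; exact Equiv.symm_apply_apply _ _⟩
    · intro hcontra
      exact hne (congrArg Subtype.val hcontra).symm
  have hlt := @Finite.one_lt_card _ _ hnt
  rw [hH, hcard1] at hlt
  omega

lemma eq_one_of_fix (A : GraphAction Γ G) (hA : A.ActsHarmonically) {γ : Γ} {x : G.V} {e : G.E}
    (hx : A.actV γ x = x) (hxe : x ∈ G.ends e) (he : A.actE γ e = e) : γ = 1 := by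
  set S : Set G.V := {v | A.actV γ v = v ∧ ∃ f, v ∈ G.ends f ∧ A.actE γ f = f} with hS
  have hxS : x ∈ S := ⟨hx, e, hxe, he⟩
  have step : ∀ v ∈ S, ∀ u,
      (SimpleGraph.fromRel fun a b : G.V => ∃ e', G.ends e' = s(a, b)).Adj v u → u ∈ S := by
    intro v hv u hadj
    obtain ⟨hv1, f, hvf, hf⟩ := hv
    obtain ⟨hne, hrel⟩ := hadj
    have hexists : ∃ e', G.ends e' = s(v, u) := by
      rcases hrel with ⟨e', he'⟩ | ⟨e', he'⟩
      · exact ⟨e', he'⟩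
      · exact ⟨e', by rw [he', Sym2.eq_swap]⟩
    obtain ⟨e', he'⟩ := hexists
    have hve' : v ∈ G.ends e' := by rw [he']; exact Sym2.mem_mk_left _ _
    have hue' : u ∈ G.ends e' := by rw [he']; exact Sym2.mem_mk_right _ _
    have hfix' : A.actE γ e' = e' := A.fix_incident_edges hA hv1 hvf hf e' hve'
    have hmap : s(A.actV γ v, A.actV γ u) = s(v, u) := by
      rw [← Sym2.map_pair_eq, ← he', ← A.ends_map, hfix']
    rw [hv1] at hmap
    have hu : A.actV γ u = u := by
      rcases Sym2.eq_iff.mp hmap with ⟨_, h2⟩ | ⟨h1, h2⟩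
      · exact h2
      · exact absurd h1 hne
    exact ⟨hu, e', hue', hfix'⟩
  have hall : ∀ v, v ∈ S := by
    have hmain : ∀ (a b : G.V)
        (_ : (SimpleGraph.fromRel fun a b : G.V => ∃ e', G.ends e' = s(a, b)).Walk a b),
        a ∈ S → b ∈ S := by
      intro a b w
      induction w with
      | nil => exact id
      | cons h p ih => exact fun ha => ih (step _ ha _ h)
    intro v
    obtain ⟨w⟩ := G.connected.preconnected x v
    exact hmain x v w hxS
  apply A.faithful
  · exact fun v => (hall v).1
  · intro f
    obtain ⟨a, b, hab⟩ := sym2_exists_mk (G.ends f)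
    have haf : a ∈ G.ends f := by rw [hab]; exact Sym2.mem_mk_left _ _
    obtain ⟨ha1, f₀, hf₀, hf₀fix⟩ := hall a
    exact A.fix_incident_edges hA ha1 hf₀ hf₀fix f haf

lemma free_nonvertical (A : GraphAction Γ G) (hA : A.ActsHarmonically) {e : G.E}
    (he : ¬ A.Vertical ⊤ e) {γ : Γ} (hγ : A.actE γ e = e) : γ = 1 := by
  obtain ⟨a, b, hab⟩ := sym2_exists_mk (G.ends e)
  have hae : a ∈ G.ends e := by rw [hab]; exact Sym2.mem_mk_left _ _
  have hmem : A.actV γ a ∈ G.ends e := by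
    have h5 := A.mem_ends_act γ hae; rwa [hγ] at h5
  rcases Sym2.mem_iff.mp (hab ▸ hmem) with h1 | h1
  · exact A.eq_one_of_fix hA h1 hae hγ
  · exact absurd ⟨a, b, hab, γ, Subgroup.mem_top γ, h1⟩ he

end GraphAction
end Aux

section Counting

lemma mk_eq_iff_rel {α : Type*} (s : Setoid α) (a : α) (c : Quotient s) :
    Quotient.mk s a = c ↔ s.r a (Quotient.out c) := by
  constructor
  · intro h; exact Quotient.exact (h.trans (Quotient.out_eq c).symm)
  · intro h; rw [← Quotient.out_eq c]; exact Quotient.sound h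

lemma card_eq_sum_fibers {α : Type} [Fintype α] (s : Setoid α) :
    Fintype.card α = ∑ c : Quotient s, Nat.card {a : α // Quotient.mk s a = c} := by
  rw [← Fintype.card_congr (Equiv.sigmaFiberEquiv (Quotient.mk s)), Fintype.card_sigma]
  exact Finset.sum_congr rfl fun c _ => (Nat.card_eq_fintype_card).symm

lemma qsum_fibers {α : Type} [Fintype α] (s : Setoid α) (g : α → ℚ)
    (hg : ∀ a b : α, s.r a b → g a = g b) :
    ∑ a : α, g a =
      ∑ c : Quotient s, (Nat.card {a : α // Quotient.mk s a = c} : ℚ) * g (Quotient.out c) := by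
  rw [← Fintype.sum_fiberwise (Quotient.mk s) g]
  refine Finset.sum_congr rfl fun c _ => ?_
  have hconst : ∀ a : {a : α // Quotient.mk s a = c}, g a.val = g (Quotient.out c) := fun a =>
    hg _ _ ((mk_eq_iff_rel s a.val c).mp a.2)
  rw [Finset.sum_congr rfl fun a _ => hconst a, Finset.sum_const, Finset.card_univ,
    nsmul_eq_mul, Nat.card_eq_fintype_card]

namespace GraphAction

variable {Γ : Type} [Group Γ] {G : Multigraph}

lemma actV_inv_eq (A : GraphAction Γ G) {δ : Γ} {x y : G.V} (h : A.actV δ x = y) :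
    A.actV δ⁻¹ y = x := by
  rw [← h, map_inv]; exact Equiv.symm_apply_apply _ _

lemma actE_inv_eq (A : GraphAction Γ G) {δ : Γ} {e f : G.E} (h : A.actE δ e = f) :
    A.actE δ⁻¹ f = e := by
  rw [← h, map_inv]; exact Equiv.symm_apply_apply _ _

lemma vrel_top_act (A : GraphAction Γ G) (γ : Γ) {x y : G.V} (h : A.vrel ⊤ x y) :
    A.vrel ⊤ (A.actV γ x) (A.actV γ y) := by
  obtain ⟨δ, -, hδ⟩ := h
  refine ⟨γ * δ * γ⁻¹, Subgroup.mem_top _, ?_⟩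
  rw [map_mul, map_mul, map_inv]
  simp only [Equiv.Perm.mul_apply, Equiv.Perm.inv_def, Equiv.symm_apply_apply]
  rw [hδ]

lemma vertical_act (A : GraphAction Γ G) (γ : Γ) {e : G.E} (h : A.Vertical ⊤ e) :
    A.Vertical ⊤ (A.actE γ e) := by
  obtain ⟨a, b, hab, hrel⟩ := h
  exact ⟨A.actV γ a, A.actV γ b, by rw [A.ends_map, hab, Sym2.map_pair_eq],
    A.vrel_top_act γ hrel⟩

lemma vertical_act_iff (A : GraphAction Γ G) (γ : Γ) (e : G.E) :
    A.Vertical ⊤ (A.actE γ e) ↔ A.Vertical ⊤ e := by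
  constructor
  · intro h
    have h2 := A.vertical_act γ⁻¹ h
    rwa [A.actE_inv_eq rfl] at h2
  · exact A.vertical_act γ

lemma vertMult_eq_of_vrel (A : GraphAction Γ G) {x y : G.V} (h : A.vrel ⊤ x y) :
    A.vertMult ⊤ x = A.vertMult ⊤ y := by
  obtain ⟨γ, -, hγ⟩ := h
  apply Nat.card_congr
  refine Equiv.subtypeEquiv (A.actE γ) fun f => ?_
  constructor
  · rintro ⟨h1, h2⟩
    refine ⟨?_, A.vertical_act γ h2⟩
    have h3 := A.mem_ends_act γ h1; rwa [hγ] at h3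
  · rintro ⟨h1, h2⟩
    refine ⟨?_, (A.vertical_act_iff γ f).mp h2⟩
    have h3 := A.mem_ends_act γ⁻¹ h1
    rwa [A.actE_inv_eq rfl, A.actV_inv_eq hγ] at h3

lemma actV_conj_fix (A : GraphAction Γ G) {γ δ : Γ} {x y : G.V} (hγ : A.actV γ x = y)
    (hδ : A.actV δ x = x) : A.actV (γ * δ * γ⁻¹) y = y := by
  rw [map_mul, map_mul]
  simp only [Equiv.Perm.mul_apply]
  rw [A.actV_inv_eq hγ, hδ, hγ]

lemma stabOrder_eq_of_vrel (A : GraphAction Γ G) {x y : G.V} (h : A.vrel ⊤ x y) :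
    A.stabOrder ⊤ x = A.stabOrder ⊤ y := by
  obtain ⟨γ, -, hγ⟩ := h
  apply Nat.card_congr
  refine Equiv.subtypeEquiv (MulAut.conj γ).toEquiv fun δ => ?_
  simp only [MulEquiv.toEquiv_eq_coe, EquivLike.coe_coe, MulAut.conj_apply]
  constructor
  · rintro ⟨-, h2⟩
    exact ⟨Subgroup.mem_top _, A.actV_conj_fix hγ h2⟩
  · rintro ⟨-, h2⟩
    refine ⟨Subgroup.mem_top _, ?_⟩
    have h3 := A.actV_conj_fix (A.actV_inv_eq hγ) h2
    rwa [show γ⁻¹ * (γ * δ * γ⁻¹) * γ⁻¹⁻¹ = δ by group] at h3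

lemma fiber_mul_r (A : GraphAction Γ G) (y : A.quotV ⊤) :
    Nat.card {x : G.V // Quotient.mk (A.vSetoid ⊤) x = y} * A.r ⊤ y = Nat.card Γ := by
  classical
  haveI := A.finite_aux
  letI : MulAction Γ G.V := MulAction.compHom _ A.actV
  set x₀ := Quotient.out y with hx₀
  have h1 : {x : G.V // Quotient.mk (A.vSetoid ⊤) x = y} ≃ MulAction.orbit Γ x₀ := by
    apply Equiv.subtypeEquivRight
    intro x
    rw [MulAction.mem_orbit_iff]
    constructor
    · intro h
      have h2 : A.vrel ⊤ x x₀ := (mk_eq_iff_rel _ x y).mp h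
      obtain ⟨δ, -, hδ⟩ := h2
      exact ⟨δ⁻¹, A.actV_inv_eq hδ⟩
    · rintro ⟨δ, hδ⟩
      exact (mk_eq_iff_rel _ x y).mpr ⟨δ⁻¹, Subgroup.mem_top _, A.actV_inv_eq hδ⟩
  have h2 : {δ : Γ // δ ∈ (⊤ : Subgroup Γ) ∧ A.actV δ x₀ = x₀} ≃ MulAction.stabilizer Γ x₀ := by
    apply Equiv.subtypeEquivRight
    intro δ
    rw [MulAction.mem_stabilizer_iff]
    exact ⟨fun h => h.2, fun h => ⟨Subgroup.mem_top _, h⟩⟩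
  have h3 := MulAction.orbitEquivQuotientStabilizer Γ x₀
  have h4 := Subgroup.card_eq_card_quotient_mul_card_subgroup (MulAction.stabilizer Γ x₀)
  have hr : A.r ⊤ y = Nat.card (MulAction.stabilizer Γ x₀) := Nat.card_congr h2
  rw [Nat.card_congr (h1.trans h3), hr]
  exact h4.symm

lemma fiber_e_card (A : GraphAction Γ G) (hA : A.ActsHarmonically) (c : A.quotE ⊤) :
    Nat.card {f : {e : G.E // ¬ A.Vertical ⊤ e} //
      Quotient.mk ((A.eSetoid ⊤).comap (Subtype.val : {e : G.E // ¬ A.Vertical ⊤ e} → G.E)) f = c}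
      = Nat.card Γ := by
  classical
  set e₀ := Quotient.out c with he₀
  symm
  apply Nat.card_congr
  have hmk : ∀ f : {e : G.E // ¬ A.Vertical ⊤ e},
      Quotient.mk ((A.eSetoid ⊤).comap
        (Subtype.val : {e : G.E // ¬ A.Vertical ⊤ e} → G.E)) f = c ↔
      ∃ δ : Γ, A.actE δ e₀.val = f.val := by
    intro f
    rw [mk_eq_iff_rel]
    constructor
    · rintro ⟨δ, -, hδ⟩
      exact ⟨δ⁻¹, A.actE_inv_eq hδ⟩
    · rintro ⟨δ, hδ⟩
      exact ⟨δ⁻¹, Subgroup.mem_top _, A.actE_inv_eq hδ⟩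
  refine Equiv.ofBijective (fun γ => ⟨⟨A.actE γ e₀.val,
    fun hv => e₀.2 ((A.vertical_act_iff γ e₀.val).mp hv)⟩, (hmk _).mpr ⟨γ, rfl⟩⟩) ⟨?_, ?_⟩
  · intro γ₁ γ₂ h
    have hval : A.actE γ₁ e₀.val = A.actE γ₂ e₀.val :=
      congrArg (fun z => z.val.val) h
    have h5 : A.actE (γ₂⁻¹ * γ₁) e₀.val = e₀.val := by
      rw [map_mul, Equiv.Perm.mul_apply, hval, map_inv]
      exact Equiv.symm_apply_apply _ _
    have h6 := A.free_nonvertical hA e₀.2 h5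
    exact inv_mul_eq_one.mp h6 |>.symm
  · rintro ⟨f, hf⟩
    obtain ⟨δ, hδ⟩ := (hmk f).mp hf
    exact ⟨δ, Subtype.ext (Subtype.ext hδ)⟩

lemma stab_dvd_vertMult (A : GraphAction Γ G) (hA : A.ActsHarmonically) (x : G.V) :
    A.stabOrder ⊤ x ∣ A.vertMult ⊤ x := by
  classical
  let t : Setoid {e : G.E // x ∈ G.ends e ∧ A.Vertical ⊤ e} :=
    { r := fun a b => ∃ δ : Γ, A.actV δ x = x ∧ A.actE δ a.val = b.val
      iseqv := by
        constructor
        · exact fun a => ⟨1, by simp, by simp⟩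
        · rintro a b ⟨δ, h1, h2⟩
          exact ⟨δ⁻¹, A.actV_inv_eq h1, A.actE_inv_eq h2⟩
        · rintro a b c ⟨δ₁, h1, h2⟩ ⟨δ₂, h3, h4⟩
          refine ⟨δ₂ * δ₁, ?_, ?_⟩
          · rw [map_mul, Equiv.Perm.mul_apply, h1, h3]
          · rw [map_mul, Equiv.Perm.mul_apply, h2, h4] }
  have hfib : ∀ cc : Quotient t,
      Nat.card {a : {e : G.E // x ∈ G.ends e ∧ A.Vertical ⊤ e} // Quotient.mk t a = cc}
        = A.stabOrder ⊤ x := by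
    intro cc
    set a₀ := Quotient.out cc with ha₀
    symm
    apply Nat.card_congr
    refine Equiv.ofBijective (fun δ => ⟨⟨A.actE δ.val a₀.val,
      by have h3 := A.mem_ends_act δ.val a₀.2.1; rwa [δ.2.2] at h3,
      A.vertical_act δ.val a₀.2.2⟩,
      (mk_eq_iff_rel t _ cc).mpr ⟨δ.val⁻¹, A.actV_inv_eq δ.2.2, A.actE_inv_eq rfl⟩⟩) ⟨?_, ?_⟩
    · intro δ₁ δ₂ h
      have hval : A.actE δ₁.val a₀.val = A.actE δ₂.val a₀.val :=
        congrArg (fun z => z.val.val) h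
      have h5 : A.actE (δ₂.val⁻¹ * δ₁.val) a₀.val = a₀.val := by
        rw [map_mul, Equiv.Perm.mul_apply, hval, map_inv]
        exact Equiv.symm_apply_apply _ _
      have hfix : A.actV (δ₂.val⁻¹ * δ₁.val) x = x := by
        rw [map_mul, Equiv.Perm.mul_apply, δ₁.2.2, A.actV_inv_eq δ₂.2.2]
      have h6 := A.eq_one_of_fix hA hfix a₀.2.1 h5
      apply Subtype.ext
      exact inv_mul_eq_one.mp h6 |>.symm
  -- cardinal bookkeeping
    · rintro ⟨f, hf⟩
      obtain ⟨δ, hδ1, hδ2⟩ := (mk_eq_iff_rel t f cc).mp hf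
      refine ⟨⟨δ⁻¹, Subgroup.mem_top _, A.actV_inv_eq hδ1⟩, ?_⟩
      apply Subtype.ext; apply Subtype.ext
      exact A.actE_inv_eq hδ2
  have hcount := card_eq_sum_fibers t
  rw [Finset.sum_congr rfl fun cc _ => hfib cc, Finset.sum_const, Finset.card_univ,
    smul_eq_mul] at hcount
  refine ⟨Fintype.card (Quotient t), ?_⟩
  rw [vertMult, Nat.card_eq_fintype_card]
  rw [hcount]; ring

lemma card_ends_two (G : Multigraph) (e : G.E) :
    Nat.card {x : G.V // x ∈ G.ends e} = 2 := by
  classical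
  obtain ⟨a, b, hab⟩ := sym2_exists_mk (G.ends e)
  have hne : a ≠ b := ne_of_ends_eq G hab
  rw [Nat.card_eq_fintype_card]
  have hiff : ∀ x : G.V, x ∈ G.ends e ↔ x ∈ ({a, b} : Finset G.V) := by
    intro x
    rw [hab, Sym2.mem_iff, Finset.mem_insert, Finset.mem_singleton]
  rw [Fintype.card_congr (Equiv.subtypeEquivRight hiff), Fintype.card_coe,
    Finset.card_pair hne]

lemma two_mul_vert (A : GraphAction Γ G) :
    2 * Nat.card {e : G.E // A.Vertical ⊤ e} = ∑ x : G.V, A.vertMult ⊤ x := by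
  classical
  have he : (Σ e : {e : G.E // A.Vertical ⊤ e}, {x : G.V // x ∈ G.ends e.val}) ≃
      (Σ x : G.V, {e : G.E // x ∈ G.ends e ∧ A.Vertical ⊤ e}) :=
    ⟨fun p => ⟨p.2.val, p.1.val, p.2.2, p.1.2⟩,
     fun p => ⟨⟨p.2.val, p.2.2.2⟩, ⟨p.1, p.2.2.1⟩⟩,
     fun p => rfl, fun p => rfl⟩
  have h1 := Fintype.card_congr he
  rw [Fintype.card_sigma, Fintype.card_sigma] at h1
  calc 2 * Nat.card {e : G.E // A.Vertical ⊤ e}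
      = ∑ _e : {e : G.E // A.Vertical ⊤ e}, 2 := by
        rw [Finset.sum_const, Finset.card_univ, smul_eq_mul, Nat.card_eq_fintype_card,
          mul_comm]
    _ = ∑ e : {e : G.E // A.Vertical ⊤ e}, Fintype.card {x : G.V // x ∈ G.ends e.val} := by
        refine Finset.sum_congr rfl fun e _ => ?_
        rw [← Nat.card_eq_fintype_card, card_ends_two]
    _ = ∑ x : G.V, Fintype.card {e : G.E // x ∈ G.ends e ∧ A.Vertical ⊤ e} := h1
    _ = ∑ x : G.V, A.vertMult ⊤ x := by
        refine Finset.sum_congr rfl fun x _ => ?_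
        rw [vertMult, Nat.card_eq_fintype_card]

lemma card_E_split (A : GraphAction Γ G) :
    Fintype.card G.E =
      Nat.card {e : G.E // A.Vertical ⊤ e} + Nat.card {e : G.E // ¬ A.Vertical ⊤ e} := by
  classical
  rw [Nat.card_eq_fintype_card, Nat.card_eq_fintype_card, Fintype.card_subtype_compl]
  have hle : Fintype.card {e : G.E // A.Vertical ⊤ e} ≤ Fintype.card G.E :=
    Fintype.card_subtype_le _
  omega

end GraphAction
end Counting

section RH

namespace GraphAction

variable {Γ : Type} [Group Γ] {G : Multigraph}

lemma r_pos (A : GraphAction Γ G) (y : A.quotV ⊤) : 0 < A.r ⊤ y := by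
  haveI : Nonempty {γ : Γ // γ ∈ (⊤ : Subgroup Γ) ∧
      A.actV γ (Quotient.out y) = Quotient.out y} :=
    ⟨⟨1, Subgroup.mem_top _, by simp⟩⟩
  haveI : Finite {γ : Γ // γ ∈ (⊤ : Subgroup Γ) ∧
      A.actV γ (Quotient.out y) = Quotient.out y} := by
    haveI := A.finite_aux
    infer_instance
  exact Nat.card_pos

lemma rh (A : GraphAction Γ G) (hA : A.ActsHarmonically) :
    2 * ((Fintype.card G.E : ℚ) - (Fintype.card G.V : ℚ)) =
      (Nat.card Γ : ℚ) * (2 * ((A.quotGenus ⊤ : ℚ) - 1) + A.ram ⊤) := by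
  classical
  haveI := A.finite_aux
  set n : ℚ := (Nat.card Γ : ℚ) with hn
  set s := A.vSetoid ⊤ with hs
  have hfib : ∀ y : A.quotV ⊤,
      (Nat.card {x : G.V // Quotient.mk s x = y} : ℚ) * (A.r ⊤ y : ℚ) = n := by
    intro y
    rw [hn]
    exact_mod_cast congrArg (fun k : ℕ => (k : ℚ)) (A.fiber_mul_r y)
  have hV : (Fintype.card G.V : ℚ) =
      ∑ y : A.quotV ⊤, (Nat.card {x : G.V // Quotient.mk s x = y} : ℚ) := by
    have h1 := qsum_fibers s (fun _ => (1 : ℚ)) (fun _ _ _ => rfl)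
    simp only [mul_one] at h1
    rw [← h1]
    simp [Finset.card_univ]
  have hsumv : ∑ x : G.V, (A.vertMult ⊤ x : ℚ) =
      ∑ y : A.quotV ⊤, (Nat.card {x : G.V // Quotient.mk s x = y} : ℚ) *
        (A.vertMult ⊤ (Quotient.out y) : ℚ) :=
    qsum_fibers s (fun x => (A.vertMult ⊤ x : ℚ))
      (fun a b hab => by
        show ((A.vertMult ⊤ a : ℕ) : ℚ) = ((A.vertMult ⊤ b : ℕ) : ℚ)
        rw [A.vertMult_eq_of_vrel hab])
  have hw : ∀ y : A.quotV ⊤,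
      (A.w ⊤ y : ℚ) * (A.r ⊤ y : ℚ) = (A.vertMult ⊤ (Quotient.out y) : ℚ) := by
    intro y
    have hdvd : A.r ⊤ y ∣ A.vertMult ⊤ (Quotient.out y) := A.stab_dvd_vertMult hA _
    exact_mod_cast congrArg (fun k : ℕ => (k : ℚ)) (Nat.div_mul_cancel hdvd)
  have hEv : 2 * (Nat.card {e : G.E // A.Vertical ⊤ e} : ℚ) =
      ∑ x : G.V, (A.vertMult ⊤ x : ℚ) := by
    have h2 : ((2 * Nat.card {e : G.E // A.Vertical ⊤ e} : ℕ) : ℚ) =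
        ((∑ x : G.V, A.vertMult ⊤ x : ℕ) : ℚ) :=
      congrArg (fun k : ℕ => (k : ℚ)) A.two_mul_vert
    push_cast at h2
    exact h2
  have hEh : (Nat.card {e : G.E // ¬ A.Vertical ⊤ e} : ℚ) =
      (Nat.card (A.quotE ⊤) : ℚ) * n := by
    have h1 := card_eq_sum_fibers
      ((A.eSetoid ⊤).comap (Subtype.val : {e : G.E // ¬ A.Vertical ⊤ e} → G.E))
    rw [Finset.sum_congr rfl (fun c _ => A.fiber_e_card hA c), Finset.sum_const,
      Finset.card_univ, smul_eq_mul] at h1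
    rw [Nat.card_eq_fintype_card, h1, hn]
    push_cast [Nat.card_eq_fintype_card]
    ring
  have hE : (Fintype.card G.E : ℚ) = (Nat.card {e : G.E // A.Vertical ⊤ e} : ℚ) +
      (Nat.card {e : G.E // ¬ A.Vertical ⊤ e} : ℚ) := by
    exact_mod_cast congrArg (fun k : ℕ => (k : ℚ)) A.card_E_split
  have hram : A.ram ⊤ = ∑ y : A.quotV ⊤, (2 * (1 - 1 / (A.r ⊤ y : ℚ)) + (A.w ⊤ y : ℚ)) :=
    finsum_eq_sum_of_fintype _
  have hterm : ∀ y : A.quotV ⊤, n * (2 * (1 - 1 / (A.r ⊤ y : ℚ)) + (A.w ⊤ y : ℚ)) =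
      2 * n - 2 * (Nat.card {x : G.V // Quotient.mk s x = y} : ℚ)
        + (Nat.card {x : G.V // Quotient.mk s x = y} : ℚ) *
          (A.vertMult ⊤ (Quotient.out y) : ℚ) := by
    intro y
    have hr0 : (A.r ⊤ y : ℚ) ≠ 0 := by
      have := A.r_pos y
      positivity
    have hFv : (Nat.card {x : G.V // Quotient.mk s x = y} : ℚ) = n / (A.r ⊤ y : ℚ) :=
      (eq_div_iff hr0).mpr (hfib y)
    have hv : (A.vertMult ⊤ (Quotient.out y) : ℚ) = (A.w ⊤ y : ℚ) * (A.r ⊤ y : ℚ) :=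
      (hw y).symm
    rw [hFv, hv]
    field_simp
  have hsum : n * A.ram ⊤ = 2 * n * (Nat.card (A.quotV ⊤) : ℚ)
      - 2 * (Fintype.card G.V : ℚ)
      + 2 * (Nat.card {e : G.E // A.Vertical ⊤ e} : ℚ) := by
    rw [hram, Finset.mul_sum, Finset.sum_congr rfl fun y _ => hterm y]
    rw [Finset.sum_add_distrib, Finset.sum_sub_distrib, Finset.sum_const, Finset.card_univ,
      nsmul_eq_mul]
    have e1 : ∑ y : A.quotV ⊤, 2 * (Nat.card {x : G.V // Quotient.mk s x = y} : ℚ)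
        = 2 * (Fintype.card G.V : ℚ) := by rw [← Finset.mul_sum, ← hV]
    have e2 : ∑ y : A.quotV ⊤, (Nat.card {x : G.V // Quotient.mk s x = y} : ℚ) *
        (A.vertMult ⊤ (Quotient.out y) : ℚ)
        = 2 * (Nat.card {e : G.E // A.Vertical ⊤ e} : ℚ) := hsumv.symm.trans hEv.symm
    rw [e1, e2, Nat.card_eq_fintype_card (α := A.quotV ⊤)]
    ring
  have hG' : (A.quotGenus ⊤ : ℚ) = (Nat.card (A.quotE ⊤) : ℚ)
      - (Nat.card (A.quotV ⊤) : ℚ) + 1 := by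
    rw [quotGenus]
    push_cast
    ring
  linear_combination 2 * hE + 2 * hEh - hsum - 2 * n * hG'

end GraphAction
end RH

section Conn

namespace GraphAction

variable {Γ : Type} [Group Γ] {G : Multigraph}

lemma quot_conn_aux (A : GraphAction Γ G) :
    Nat.card (A.quotV ⊤) ≤ Nat.card (A.quotE ⊤) + 1 := by
  classical
  -- quotient edge endpoints
  have hwd : ∀ a b : {e : G.E // ¬ A.Vertical ⊤ e},
      ((A.eSetoid ⊤).comap (Subtype.val : {e : G.E // ¬ A.Vertical ⊤ e} → G.E)).r a b →
      (G.ends a.val).map (fun x => Quotient.mk (A.vSetoid ⊤) x) =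
      (G.ends b.val).map (fun x => Quotient.mk (A.vSetoid ⊤) x) := by
    rintro a b ⟨γ, -, hγ⟩
    rw [← hγ, A.ends_map, Sym2.map_map]
    congr 1
    funext x
    exact (Quotient.sound ⟨γ⁻¹, Subgroup.mem_top _, A.actV_inv_eq rfl⟩ :
      Quotient.mk (A.vSetoid ⊤) (A.actV γ x) = Quotient.mk (A.vSetoid ⊤) x).symm
  set endsQ : A.quotE ⊤ → Sym2 (A.quotV ⊤) :=
    Quotient.lift
      (fun e : {e : G.E // ¬ A.Vertical ⊤ e} =>
        (G.ends e.val).map (fun x => Quotient.mk (A.vSetoid ⊤) x)) hwd with hendsQ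
  set Q : SimpleGraph (A.quotV ⊤) :=
    SimpleGraph.fromRel (fun a b => ∃ eb : A.quotE ⊤, endsQ eb = s(a, b)) with hQ
  have hNV : Nonempty G.V := G.connected.nonempty
  obtain ⟨x₀⟩ := hNV
  haveI : Nonempty (A.quotV ⊤) := ⟨Quotient.mk (A.vSetoid ⊤) x₀⟩
  have hstep : ∀ u v : G.V,
      (SimpleGraph.fromRel fun a b : G.V => ∃ e', G.ends e' = s(a, b)).Adj u v →
      Q.Reachable (Quotient.mk (A.vSetoid ⊤) u) (Quotient.mk (A.vSetoid ⊤) v) := by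
    intro u v hadj
    by_cases heq : Quotient.mk (A.vSetoid ⊤) u = Quotient.mk (A.vSetoid ⊤) v
    · rw [heq]
    · obtain ⟨hne, hrel⟩ := hadj
      have hex : ∃ e', G.ends e' = s(u, v) := by
        rcases hrel with ⟨e', he'⟩ | ⟨e', he'⟩
        · exact ⟨e', he'⟩
        · exact ⟨e', by rw [he', Sym2.eq_swap]⟩
      obtain ⟨e, he⟩ := hex
      have hnv : ¬ A.Vertical ⊤ e := by
        rintro ⟨a, b, hab, hrel2⟩
        rw [he] at hab
        rcases Sym2.eq_iff.mp hab.symm with ⟨rfl, rfl⟩ | ⟨rfl, rfl⟩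
        · exact heq (Quotient.sound hrel2)
        · exact heq (Quotient.sound ((A.vSetoid ⊤).iseqv.symm hrel2))
      have hadjQ : Q.Adj (Quotient.mk (A.vSetoid ⊤) u) (Quotient.mk (A.vSetoid ⊤) v) := by
        rw [hQ, SimpleGraph.fromRel_adj]
        refine ⟨heq, Or.inl ⟨Quotient.mk _ ⟨e, hnv⟩, ?_⟩⟩
        show (G.ends e).map (fun x => Quotient.mk (A.vSetoid ⊤) x) = _
        rw [he, Sym2.map_pair_eq]
      exact hadjQ.reachable
  have hwalk : ∀ (a b : G.V)
      (_ : (SimpleGraph.fromRel fun a b : G.V => ∃ e', G.ends e' = s(a, b)).Walk a b),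
      Q.Reachable (Quotient.mk (A.vSetoid ⊤) a) (Quotient.mk (A.vSetoid ⊤) b) := by
    intro a b w
    induction w with
    | nil => exact SimpleGraph.Reachable.refl _
    | cons h p ih => exact (hstep _ _ h).trans ih
  have hQconn : Q.Connected := by
    rw [SimpleGraph.connected_iff]
    refine ⟨?_, inferInstance⟩
    intro a b
    obtain ⟨u, rfl⟩ := Quotient.exists_rep a
    obtain ⟨v, rfl⟩ := Quotient.exists_rep b
    obtain ⟨w⟩ := G.connected.preconnected u v
    exact hwalk u v w
  set root : A.quotV ⊤ := Quotient.mk (A.vSetoid ⊤) x₀ with hroot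
  have hmap : ∀ v : {v : A.quotV ⊤ // v ≠ root}, ∃ (eb : A.quotE ⊤) (u : A.quotV ⊤),
      endsQ eb = s(v.val, u) ∧ Q.dist u root < Q.dist v.val root := by
    rintro ⟨v, hv⟩
    have hd : 0 < Q.dist v root := hQconn.pos_dist_of_ne hv
    obtain ⟨p, hp⟩ := (hQconn v root).exists_walk_length_eq_dist
    obtain ⟨u, h, q, hq⟩ : ∃ (u : A.quotV ⊤) (_ : Q.Adj v u) (q : Q.Walk u root),
        q.length + 1 = Q.dist v root := by
      cases p with
      | nil => rw [SimpleGraph.Walk.length_nil] at hp; omega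
      | cons h q =>
        rw [SimpleGraph.Walk.length_cons] at hp
        exact ⟨_, h, q, hp⟩
    have hdu : Q.dist u root < Q.dist v root := by
      have := SimpleGraph.dist_le q
      omega
    rw [hQ, SimpleGraph.fromRel_adj] at h
    rcases h.2 with ⟨eb, heb⟩ | ⟨eb, heb⟩
    · exact ⟨eb, u, heb, hdu⟩
    · exact ⟨eb, u, by rw [heb, Sym2.eq_swap], hdu⟩
  choose f u hf hd using hmap
  have hfi : Function.Injective f := by
    intro v₁ v₂ h
    by_contra hne
    have hne' : v₁.val ≠ v₂.val := fun hc => hne (Subtype.ext hc)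
    have h1 := hf v₁
    have h2 := hf v₂
    rw [h] at h1
    have h3 := h1.symm.trans h2
    rcases Sym2.eq_iff.mp h3 with ⟨ha, hb⟩ | ⟨ha, hb⟩
    · exact hne' ha
    · have d1 := hd v₁
      have d2 := hd v₂
      rw [ha] at d1
      rw [← hb] at d2
      omega
  have hle := Nat.card_le_card_of_injective f hfi
  have hcard : Nat.card {v : A.quotV ⊤ // v ≠ root} + 1 = Nat.card (A.quotV ⊤) := by
    rw [Nat.card_eq_fintype_card, Nat.card_eq_fintype_card]
    have hcc := Fintype.card_subtype_compl (fun v : A.quotV ⊤ => v = root)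
    rw [Fintype.card_subtype_eq] at hcc
    have hpos : 0 < Fintype.card (A.quotV ⊤) := Fintype.card_pos
    have : Fintype.card {v : A.quotV ⊤ // v ≠ root} =
        Fintype.card {v : A.quotV ⊤ // ¬ v = root} := rfl
    omega
  omega

end GraphAction
end Conn

/-- `M g` is the maximal order of a group acting harmonically on a graph of genus `g`. -/
noncomputable def M (g : ℕ) : ℕ :=
  sSup {n : ℕ | ∃ (Γ : Type) (i : Group Γ) (G : Multigraph) (A : @GraphAction Γ i G),
    @GraphAction.ActsHarmonically Γ i G A ∧ G.genus = (g : ℤ) ∧ Nat.card Γ = n}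

/-- Let `Γ` act harmonically on `G` of genus `g ≥ 2`. If the quotient
has genus at least 1, then `|Γ| ≤ 2(g−1)`; more precisely if `R = 0` then `g(G/Γ) ≥ 2`
and `|Γ|·(g(G/Γ) − 1) = g − 1` (so `|Γ| ≤ g − 1`), while if `R ≠ 0` then `|Γ| ≤ 2g − 2`.
Consequently, if `|Γ| > 2(g−1)` then `g(G/Γ) = 0`. -/
theorem quotient_positive_genus_bound {Γ : Type} [Group Γ] {G : Multigraph}
    (A : GraphAction Γ G) (hA : A.ActsHarmonically) (g : ℤ) (hg : G.genus = g)
    (h2 : 2 ≤ g) :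
    (1 ≤ A.quotGenus ⊤ →
      (Nat.card Γ : ℤ) ≤ 2 * (g - 1) ∧
      (A.ram ⊤ = 0 →
        2 ≤ A.quotGenus ⊤ ∧ (Nat.card Γ : ℤ) * (A.quotGenus ⊤ - 1) = g - 1 ∧
        (Nat.card Γ : ℤ) ≤ g - 1) ∧
      (A.ram ⊤ ≠ 0 → (Nat.card Γ : ℤ) ≤ 2 * g - 2)) ∧
    (2 * (g - 1) < (Nat.card Γ : ℤ) → A.quotGenus ⊤ = 0) := by
  classical
  haveI := A.finite_aux
  haveI : Nonempty Γ := ⟨1⟩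
  have hn : 1 ≤ Nat.card Γ := Nat.one_le_iff_ne_zero.mpr (Nat.card_pos).ne'
  have hn1 : (1 : ℚ) ≤ (Nat.card Γ : ℚ) := by exact_mod_cast hn
  have hgE : (Fintype.card G.E : ℚ) - (Fintype.card G.V : ℚ) = (g : ℚ) - 1 := by
    have h1 : (Fintype.card G.E : ℤ) - (Fintype.card G.V : ℤ) + 1 = g := hg
    have hq : (Fintype.card G.E : ℤ) - (Fintype.card G.V : ℤ) = g - 1 := by omega
    exact_mod_cast congrArg (fun k : ℤ => (k : ℚ)) hq
  have key : 2 * ((g : ℚ) - 1) =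
      (Nat.card Γ : ℚ) * (2 * ((A.quotGenus ⊤ : ℚ) - 1) + A.ram ⊤) := by
    rw [← hgE]; exact A.rh hA
  have hterm_nonneg : ∀ y : A.quotV ⊤,
      0 ≤ 2 * (1 - 1 / (A.r ⊤ y : ℚ)) + (A.w ⊤ y : ℚ) := by
    intro y
    have h1 : (1 : ℚ) ≤ (A.r ⊤ y : ℚ) := by exact_mod_cast A.r_pos y
    have hrle : 1 / (A.r ⊤ y : ℚ) ≤ 1 := by
      rw [div_le_one (by linarith)]; exact h1
    have h3 : (0 : ℚ) ≤ (A.w ⊤ y : ℚ) := by positivity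
    linarith
  have hram_nonneg : 0 ≤ A.ram ⊤ := by
    rw [GraphAction.ram, finsum_eq_sum_of_fintype]
    exact Finset.sum_nonneg fun y _ => hterm_nonneg y
  have hram_ge_one : A.ram ⊤ ≠ 0 → 1 ≤ A.ram ⊤ := by
    intro h0
    rw [GraphAction.ram, finsum_eq_sum_of_fintype] at h0 ⊢
    obtain ⟨y, -, hy⟩ := Finset.exists_ne_zero_of_sum_ne_zero h0
    have hy' : 0 < 2 * (1 - 1 / (A.r ⊤ y : ℚ)) + (A.w ⊤ y : ℚ) :=
      lt_of_le_of_ne (hterm_nonneg y) (Ne.symm hy)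
    have h1 : (1 : ℚ) ≤ (A.r ⊤ y : ℚ) := by exact_mod_cast A.r_pos y
    have hy1 : 1 ≤ 2 * (1 - 1 / (A.r ⊤ y : ℚ)) + (A.w ⊤ y : ℚ) := by
      by_cases hw0 : A.w ⊤ y = 0
      · rw [hw0] at hy' ⊢
        push_cast at hy' ⊢
        have hr1 : (1 : ℚ) < (A.r ⊤ y : ℚ) := by
          rcases lt_or_eq_of_le h1 with h | h
          · exact h
          · rw [← h] at hy'; norm_num at hy'
        have hr2 : (2 : ℚ) ≤ (A.r ⊤ y : ℚ) := by
          have hnat : 1 < A.r ⊤ y := by exact_mod_cast hr1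
          exact_mod_cast hnat
        have h4 : 1 / (A.r ⊤ y : ℚ) ≤ 1 / 2 :=
          one_div_le_one_div_of_le (by norm_num) hr2
        linarith
      · have h5 : (1 : ℚ) ≤ (A.w ⊤ y : ℚ) := by
          exact_mod_cast Nat.one_le_iff_ne_zero.mpr hw0
        have h6 : 1 / (A.r ⊤ y : ℚ) ≤ 1 := by
          rw [div_le_one (by linarith)]; exact h1
        linarith
    calc (1 : ℚ) ≤ 2 * (1 - 1 / (A.r ⊤ y : ℚ)) + (A.w ⊤ y : ℚ) := hy1
      _ ≤ ∑ z : A.quotV ⊤, (2 * (1 - 1 / (A.r ⊤ z : ℚ)) + (A.w ⊤ z : ℚ)) :=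
        Finset.single_le_sum (fun z _ => hterm_nonneg z) (Finset.mem_univ y)
  have hg0 : 0 ≤ A.quotGenus ⊤ := by
    have h1 := A.quot_conn_aux
    rw [GraphAction.quotGenus]
    have hcast : (Nat.card (A.quotV ⊤) : ℤ) ≤ (Nat.card (A.quotE ⊤) : ℤ) + 1 := by
      exact_mod_cast h1
    linarith
  have part1 : 1 ≤ A.quotGenus ⊤ →
      (Nat.card Γ : ℤ) ≤ 2 * (g - 1) ∧
      (A.ram ⊤ = 0 →
        2 ≤ A.quotGenus ⊤ ∧ (Nat.card Γ : ℤ) * (A.quotGenus ⊤ - 1) = g - 1 ∧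
        (Nat.card Γ : ℤ) ≤ g - 1) ∧
      (A.ram ⊤ ≠ 0 → (Nat.card Γ : ℤ) ≤ 2 * g - 2) := by
    intro hq1
    have hq1' : (1 : ℚ) ≤ (A.quotGenus ⊤ : ℚ) := by exact_mod_cast hq1
    have hR0 : A.ram ⊤ = 0 →
        2 ≤ A.quotGenus ⊤ ∧ (Nat.card Γ : ℤ) * (A.quotGenus ⊤ - 1) = g - 1 ∧
        (Nat.card Γ : ℤ) ≤ g - 1 := by
      intro h0
      rw [h0] at key
      have keyq : (g : ℚ) - 1 = (Nat.card Γ : ℚ) * ((A.quotGenus ⊤ : ℚ) - 1) := by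
        linear_combination key / 2
      have hint : (Nat.card Γ : ℤ) * (A.quotGenus ⊤ - 1) = g - 1 := by
        exact_mod_cast keyq.symm
      have hq2 : 2 ≤ A.quotGenus ⊤ := by
        rcases lt_or_eq_of_le hq1 with h | h
        · omega
        · exfalso
          rw [← h] at hint
          simp at hint
          omega
      have hNnn : (0 : ℤ) ≤ (Nat.card Γ : ℤ) := by positivity
      have hmul := mul_le_mul_of_nonneg_left
        (show (1 : ℤ) ≤ A.quotGenus ⊤ - 1 by omega) hNnn
      have hN1 : (1 : ℤ) ≤ (Nat.card Γ : ℤ) := by exact_mod_cast hn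
      have hle : (Nat.card Γ : ℤ) ≤ g - 1 := by
        rw [hint] at hmul
        linarith
      exact ⟨hq2, hint, hle⟩
    have hRne : A.ram ⊤ ≠ 0 → (Nat.card Γ : ℤ) ≤ 2 * g - 2 := by
      intro h0
      have hR1 := hram_ge_one h0
      have key' : 2 * ((g : ℚ) - 1) =
          (Nat.card Γ : ℚ) * (2 * ((A.quotGenus ⊤ : ℚ) - 1)) +
          (Nat.card Γ : ℚ) * A.ram ⊤ := by
        linear_combination key
      have e1 : (0 : ℚ) ≤ (Nat.card Γ : ℚ) * (2 * ((A.quotGenus ⊤ : ℚ) - 1)) :=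
        mul_nonneg (by linarith) (by linarith)
      have e2 : (Nat.card Γ : ℚ) * 1 ≤ (Nat.card Γ : ℚ) * A.ram ⊤ :=
        mul_le_mul_of_nonneg_left hR1 (by linarith)
      have hq : (Nat.card Γ : ℚ) ≤ 2 * (g : ℚ) - 2 := by linarith
      exact_mod_cast hq
    have hmain : (Nat.card Γ : ℤ) ≤ 2 * (g - 1) := by
      by_cases h0 : A.ram ⊤ = 0
      · have := (hR0 h0).2.2
        omega
      · have := hRne h0
        omega
    exact ⟨hmain, hR0, hRne⟩
  refine ⟨part1, ?_⟩
  intro hlt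
  by_cases hq1 : 1 ≤ A.quotGenus ⊤
  · exfalso
    have := (part1 hq1).1
    omega
  · omega
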